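/- Let $(b_v)_{v \in \mathbb{Z}^d}$ be a family of integers with $b_{\mathbf{0}} = 0$, and suppose there is a group homomorphism $\phi : \mathbb{Z}^d \to \mathbb{Z}$ and a constant $K$ with $K < \frac{1}{4}\min\{|\phi(e_i)| : \phi(e_i) \neq 0\}$ such that $\big| |b_v - b_w| - |\phi(v - w)| \big| \leq K$ for all $v, w \in \mathbb{Z}^d$. Then there exist signs $\epsilon_1, \dots, \epsilon_d \in \{-1, 1\}$ such that the homomorphism $\theta(v_1, \dots, v_d) := \sum_{i=1}^d \epsilon_i \phi(v_i e_i)$ satisfies $|b_v - \theta(v)| \leq 2Kd$ for all $v \in \mathbb{Z}^d$. -/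
import Mathlib


set_option maxHeartbeats 1000000

/-- Let `(b v)_{v ∈ ℤ^d}` be integers with `b 0 = 0`, and suppose there is a
homomorphism `φ : ℤ^d → ℤ` and a constant `K < (1/4) * min {|φ(eᵢ)| : φ(eᵢ) ≠ 0}` such that
`||b v - b w| - |φ (v - w)|| ≤ K` for all `v, w`. Then there are signs `εᵢ ∈ {±1}` such that
the homomorphism `θ v = ∑ i, εᵢ • φ (vᵢ • eᵢ)` satisfies `|b v - θ v| ≤ 2 K d` for all `v`. -/
theorem quasi_hom_close_to_hom (d : ℕ) (b : (Fin d → ℤ) → ℤ)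
    (hb0 : b 0 = 0) (φ : ((Fin d → ℤ)) →+ ℤ) (K : ℝ)
    (hK : ∀ i : Fin d, φ (Pi.single i 1) ≠ 0 →
      K < (1 / 4) * |((φ (Pi.single i 1) : ℤ) : ℝ)|)
    (hLip : ∀ v w : Fin d → ℤ,
      |((|b v - b w| : ℤ) : ℝ) - ((|φ (v - w)| : ℤ) : ℝ)| ≤ K) :
    ∃ ε : Fin d → ℤ, (∀ i, ε i = 1 ∨ ε i = -1) ∧
      ∀ v : Fin d → ℤ,
        ((|b v - ∑ i, ε i * φ (Pi.single i (v i))| : ℤ) : ℝ) ≤ 2 * K * d := by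
  classical
  have hK0 : 0 ≤ K := by simpa using hLip 0 0
  have hL : ∀ v w : Fin d → ℤ,
      |(|((b v : ℤ) : ℝ) - ((b w : ℤ) : ℝ)| - |((φ (v - w) : ℤ) : ℝ)|)| ≤ K := by
    intro v w
    have h := hLip v w
    push_cast at h
    exact h
  have hsingle : ∀ (i : Fin d) (n : ℤ), φ (Pi.single i n) = n * φ (Pi.single i 1) := by
    intro i n
    have h1 : (Pi.single i n : Fin d → ℤ) = n • (Pi.single i (1 : ℤ) : Fin d → ℤ) := by
      ext j
      by_cases hj : j = i
      · subst hj; simp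
      · simp [Pi.single_eq_of_ne hj]
    rw [h1, map_zsmul, smul_eq_mul]
  have key : ∀ i : Fin d, ∃ ε : ℤ, (ε = 1 ∨ ε = -1) ∧
      ∀ (v : Fin d → ℤ) (n : ℤ),
        |((b (v + Pi.single i n) : ℤ) : ℝ) - ((b v : ℤ) : ℝ)
          - (ε : ℝ) * (n : ℝ) * ((φ (Pi.single i 1) : ℤ) : ℝ)| ≤ K := by
    intro i
    have hssub : ∀ n m : ℤ, (Pi.single i n : Fin d → ℤ) - Pi.single i m = Pi.single i (n - m) := by
      intro n m
      ext j
      by_cases hj : j = i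
      · subst hj; simp
      · simp [Pi.single_eq_of_ne hj]
    by_cases hcz : φ (Pi.single i 1) = 0
    · refine ⟨1, Or.inl rfl, ?_⟩
      intro v n
      have h := hL (v + Pi.single i n) v
      rw [add_sub_cancel_left, hsingle i n, hcz] at h
      simp only [mul_zero, Int.cast_zero, abs_zero, sub_zero, abs_abs] at h
      rw [hcz]
      simpa using h
    · set cz : ℤ := φ (Pi.single i 1) with hcz_def
      set ca : ℝ := |((cz : ℤ) : ℝ)| with hca_def
      have hca1 : (1 : ℝ) ≤ ca := by
        have h1 : (1 : ℤ) ≤ |cz| := Int.one_le_abs hcz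
        rw [hca_def, ← Int.cast_abs]
        exact_mod_cast h1
      have hca0 : (0 : ℝ) < ca := lt_of_lt_of_le one_pos hca1
      have hKa : K < (1/4) * ca := hK i hcz
      set Dr : (Fin d → ℤ) → ℤ → ℝ :=
        fun v n => ((b (v + Pi.single i n) : ℤ) : ℝ) - ((b v : ℤ) : ℝ) with hDr
      have hD1 : ∀ (v : Fin d → ℤ) (n : ℤ), |(|Dr v n| - |(n : ℝ)| * ca)| ≤ K := by
        intro v n
        have h := hL (v + Pi.single i n) v
        rw [add_sub_cancel_left, hsingle i n] at h
        have habs : |((n * cz : ℤ) : ℝ)| = |(n : ℝ)| * ca := by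
          rw [hca_def]; push_cast; rw [abs_mul]
        rw [habs] at h
        exact h
      have hDdiff : ∀ (v : Fin d → ℤ) (n m : ℤ),
          |(|Dr v n - Dr v m| - |(n : ℝ) - (m : ℝ)| * ca)| ≤ K := by
        intro v n m
        have h := hL (v + Pi.single i n) (v + Pi.single i m)
        rw [add_sub_add_left_eq_sub, hssub, hsingle i (n - m)] at h
        have habs : |(((n - m) * cz : ℤ) : ℝ)| = |(n : ℝ) - (m : ℝ)| * ca := by
          rw [hca_def]; push_cast; rw [abs_mul]
        rw [habs] at h
        have hdd : Dr v n - Dr v m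
            = ((b (v + Pi.single i n) : ℤ) : ℝ) - ((b (v + Pi.single i m) : ℤ) : ℝ) := by
          simp only [hDr]; ring
        rw [hdd]
        exact h
      have sgn : ∀ (v : Fin d → ℤ) (n m : ℤ), 1 ≤ n → 1 ≤ m → 0 < Dr v n → 0 < Dr v m := by
        intro v n m hn hm hpos
        by_contra hneg
        push_neg at hneg
        have h1 := hD1 v n
        have h2 := hD1 v m
        have h3 := hDdiff v n m
        have hn' : (1 : ℝ) ≤ (n : ℝ) := by exact_mod_cast hn
        have hm' : (1 : ℝ) ≤ (m : ℝ) := by exact_mod_cast hm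
        rw [abs_of_pos hpos, abs_of_pos (show (0:ℝ) < (n:ℝ) by linarith)] at h1
        rw [abs_of_nonpos hneg, abs_of_pos (show (0:ℝ) < (m:ℝ) by linarith)] at h2
        rw [abs_of_pos (show (0:ℝ) < Dr v n - Dr v m by linarith)] at h3
        have hnm : |(n : ℝ) - (m : ℝ)| ≤ (n : ℝ) + (m : ℝ) - 2 :=
          abs_le.mpr ⟨by linarith, by linarith⟩
        have h4 : |(n : ℝ) - (m : ℝ)| * ca ≤ ((n : ℝ) + (m : ℝ) - 2) * ca :=
          mul_le_mul_of_nonneg_right hnm hca0.le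
        rw [abs_le] at h1 h2 h3
        nlinarith [h1.1, h1.2, h2.1, h2.2, h3.1, h3.2, h4, hca0, hKa]
      have hDrpos : ∀ (v : Fin d → ℤ) (n : ℤ), 1 ≤ n → Dr v n ≠ 0 := by
        intro v n hn h0
        have h1 := hD1 v n
        have hn' : (1 : ℝ) ≤ (n : ℝ) := by exact_mod_cast hn
        rw [h0, abs_zero, abs_of_pos (show (0:ℝ) < (n:ℝ) by linarith)] at h1
        have h8 : 1 * ca ≤ (n : ℝ) * ca := mul_le_mul_of_nonneg_right hn' hca0.le
        rw [abs_le] at h1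
        linarith [h1.1, h1.2]
      have stepA : ∀ v : Fin d → ℤ, ∃ e : ℤ, (e = 1 ∨ e = -1) ∧
          ∀ n : ℤ, 1 ≤ n → |Dr v n - (e : ℝ) * (n : ℝ) * ca| ≤ K := by
        intro v
        by_cases hp : 0 < Dr v 1
        · refine ⟨1, Or.inl rfl, ?_⟩
          intro n hn
          have hn' : (1 : ℝ) ≤ (n : ℝ) := by exact_mod_cast hn
          have h1 := hD1 v n
          rw [abs_of_pos (sgn v 1 n le_rfl hn hp),
            abs_of_pos (show (0:ℝ) < (n:ℝ) by linarith)] at h1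
          have he : Dr v n - ((1 : ℤ) : ℝ) * (n : ℝ) * ca = Dr v n - (n : ℝ) * ca := by
            push_cast; ring
          rw [he]
          exact h1
        · refine ⟨-1, Or.inr rfl, ?_⟩
          intro n hn
          have hn' : (1 : ℝ) ≤ (n : ℝ) := by exact_mod_cast hn
          have hneg : Dr v n < 0 := by
            rcases lt_trichotomy (Dr v n) 0 with h | h | h
            · exact h
            · exact absurd h (hDrpos v n hn)
            · exact absurd (sgn v n 1 hn le_rfl h) hp
          have h1 := hD1 v n
          rw [abs_of_neg hneg, abs_of_pos (show (0:ℝ) < (n:ℝ) by linarith)] at h1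
          have he : Dr v n - ((-1 : ℤ) : ℝ) * (n : ℝ) * ca = -(-Dr v n - (n : ℝ) * ca) := by
            push_cast; ring
          rw [he, abs_neg]
          exact h1
      choose εf hεf1 hεf2 using stepA
      have hcons : ∀ v : Fin d → ℤ, εf v = εf 0 := by
        intro v
        by_contra hne
        have hsum : (εf v : ℝ) = -((εf 0 : ℝ)) := by
          rcases hεf1 v with h1 | h1 <;> rcases hεf1 0 with h2 | h2 <;>
            first
              | (exfalso; rw [h1, h2] at hne; exact hne rfl)
              | (rw [h1, h2]; norm_num)
        set n : ℤ := |b v| + |φ v| + 2 with hn_def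
        have hn1 : (1 : ℤ) ≤ n := by
          have := abs_nonneg (b v); have := abs_nonneg (φ v); omega
        have h1 := hεf2 v n hn1
        have h2 := hεf2 0 n hn1
        have h3 := hL (v + Pi.single i n) (0 + Pi.single i n)
        rw [show (v + Pi.single i n) - (0 + Pi.single i n) = v by abel] at h3
        have hD0 : Dr 0 n = ((b (0 + Pi.single i n) : ℤ) : ℝ) := by
          simp only [hDr]; rw [hb0]; push_cast; ring
        have hDv : Dr v n = ((b (v + Pi.single i n) : ℤ) : ℝ) - ((b v : ℤ) : ℝ) := by
          simp only [hDr]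
        have hnr : (n : ℝ) = |((b v : ℤ) : ℝ)| + |((φ v : ℤ) : ℝ)| + 2 := by
          rw [hn_def]; push_cast; ring
        rw [hsum] at h1
        have hX : (2 * (n : ℝ) - 1) * 1 ≤ (2 * (n : ℝ) - 1) * ca := by
          apply mul_le_mul_of_nonneg_left hca1
          have : (1 : ℝ) ≤ (n : ℝ) := by exact_mod_cast hn1
          linarith
        rw [abs_le] at h1 h2
        have h3' := abs_le.mp h3
        have h5 : ((b v : ℤ) : ℝ) ≤ |((b v : ℤ) : ℝ)| := le_abs_self _
        have h5' : -|((b v : ℤ) : ℝ)| ≤ ((b v : ℤ) : ℝ) := neg_abs_le _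
        have h6 : ((b (v + Pi.single i n) : ℤ) : ℝ) - ((b (0 + Pi.single i n) : ℤ) : ℝ)
            ≤ |((b (v + Pi.single i n) : ℤ) : ℝ) - ((b (0 + Pi.single i n) : ℤ) : ℝ)| :=
          le_abs_self _
        have h6' : -|((b (v + Pi.single i n) : ℤ) : ℝ) - ((b (0 + Pi.single i n) : ℤ) : ℝ)|
            ≤ ((b (v + Pi.single i n) : ℤ) : ℝ) - ((b (0 + Pi.single i n) : ℤ) : ℝ) :=
          neg_abs_le _
        rcases hεf1 0 with h0 | h0 <;> rw [h0] at h1 h2 <;> push_cast at h1 h2 <;>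
          rw [hD0] at h2 <;> rw [hDv] at h1 <;>
          nlinarith [h1.1, h1.2, h2.1, h2.2, h3'.1, h3'.2, hX, hKa, hca0, hnr,
            abs_nonneg ((φ v : ℤ) : ℝ), abs_nonneg ((b v : ℤ) : ℝ)]
      have main : ∀ (v : Fin d → ℤ) (n : ℤ), |Dr v n - (εf 0 : ℝ) * (n : ℝ) * ca| ≤ K := by
        intro v n
        rcases lt_trichotomy n 0 with hlt | heq | hgt
        · have h1 : (1 : ℤ) ≤ -n := by omega
          have hrec := hεf2 (v + Pi.single i n) (-n) h1
          have hc2 : εf (v + Pi.single i n) = εf 0 := hcons _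
          rw [hc2] at hrec
          have hflip : Dr (v + Pi.single i n) (-n) = -(Dr v n) := by
            simp only [hDr]
            have hvv : (v + Pi.single i n) + Pi.single i (-n) = v := by
              have hz : (Pi.single i n : Fin d → ℤ) + Pi.single i (-n) = 0 := by
                ext j
                by_cases hj : j = i
                · subst hj; simp
                · simp [Pi.single_eq_of_ne hj]
              rw [add_assoc, hz, add_zero]
            rw [hvv]
            ring
          rw [hflip] at hrec
          have he : -Dr v n - (εf 0 : ℝ) * ((-n : ℤ) : ℝ) * ca
              = -(Dr v n - (εf 0 : ℝ) * (n : ℝ) * ca) := by push_cast; ring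
          rw [he, abs_neg] at hrec
          exact hrec
        · subst heq
          have hz : Dr v 0 = 0 := by
            simp only [hDr]
            rw [show (Pi.single i (0:ℤ) : Fin d → ℤ) = 0 from Pi.single_zero i, add_zero]
            ring
          rw [hz]
          simpa using hK0
        · have h1 : (1:ℤ) ≤ n := hgt
          have hh := hεf2 v n h1
          rw [hcons v] at hh
          exact hh
      refine ⟨εf 0 * (if 0 < cz then 1 else -1), ?_, ?_⟩
      · rcases hεf1 0 with h | h <;> by_cases hc : 0 < cz <;> simp [h, hc]
      · intro v n
        have hsc : ((εf 0 * (if 0 < cz then 1 else -1) : ℤ) : ℝ) * (n : ℝ) * ((cz : ℤ) : ℝ)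
            = (εf 0 : ℝ) * (n : ℝ) * ca := by
          by_cases hc : 0 < cz
          · rw [if_pos hc, hca_def, abs_of_pos (show (0:ℝ) < ((cz:ℤ):ℝ) by exact_mod_cast hc)]
            push_cast; ring
          · have hc' : cz < 0 := lt_of_le_of_ne (not_lt.mp hc) hcz
            rw [if_neg hc, hca_def, abs_of_neg (show ((cz:ℤ):ℝ) < 0 by exact_mod_cast hc')]
            push_cast; ring
        rw [hsc]
        exact main v n
  choose ε hε1 hε2 using key
  refine ⟨ε, hε1, ?_⟩
  intro v
  set w : ℕ → (Fin d → ℤ) := fun k => fun j => if (j : ℕ) < k then v j else 0 with hw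
  have hw0 : w 0 = 0 := by funext j; simp [hw]
  have hwd : w d = v := by funext j; simp [hw, j.isLt]
  have hwsucc : ∀ (k : ℕ) (hk : k < d),
      w (k + 1) = w k + Pi.single (⟨k, hk⟩ : Fin d) (v ⟨k, hk⟩) := by
    intro k hk
    funext j
    by_cases hj : (j : ℕ) = k
    · have hj' : j = (⟨k, hk⟩ : Fin d) := Fin.ext hj
      subst hj'
      simp [hw]
    · have hj' : j ≠ (⟨k, hk⟩ : Fin d) := by
        simp [Fin.ext_iff, hj]
      have hiff : ((j : ℕ) < k + 1) ↔ ((j : ℕ) < k) := by omega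
      simp [hw, Pi.single_eq_of_ne hj', Pi.add_apply, hiff]
  have hterm : ∀ (k : ℕ) (hk : k < d),
      |((b (w (k+1)) : ℤ) : ℝ) - ((b (w k) : ℤ) : ℝ)
        - (ε ⟨k,hk⟩ : ℝ) * ((φ (Pi.single (⟨k,hk⟩ : Fin d) (v ⟨k,hk⟩)) : ℤ) : ℝ)| ≤ K := by
    intro k hk
    have h := hε2 ⟨k, hk⟩ (w k) (v ⟨k, hk⟩)
    rw [← hwsucc k hk] at h
    have hφ : ((φ (Pi.single (⟨k,hk⟩ : Fin d) (v ⟨k,hk⟩)) : ℤ) : ℝ)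
        = ((v ⟨k,hk⟩ : ℤ) : ℝ) * ((φ (Pi.single (⟨k,hk⟩ : Fin d) 1) : ℤ) : ℝ) := by
      rw [hsingle]; push_cast; ring
    rw [hφ]
    have he : ((b (w (k+1)) : ℤ) : ℝ) - ((b (w k) : ℤ) : ℝ)
        - (ε ⟨k,hk⟩ : ℝ) * (((v ⟨k,hk⟩ : ℤ) : ℝ) * ((φ (Pi.single (⟨k,hk⟩ : Fin d) 1) : ℤ) : ℝ))
        = ((b (w (k+1)) : ℤ) : ℝ) - ((b (w k) : ℤ) : ℝ)
        - (ε ⟨k,hk⟩ : ℝ) * ((v ⟨k,hk⟩ : ℤ) : ℝ) * ((φ (Pi.single (⟨k,hk⟩ : Fin d) 1) : ℤ) : ℝ) := by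
      ring
    rw [he]
    exact h
  have hgoal : ((|b v - ∑ i, ε i * φ (Pi.single i (v i))| : ℤ) : ℝ)
      = |((b v : ℤ) : ℝ) - ∑ i, (ε i : ℝ) * ((φ (Pi.single i (v i)) : ℤ) : ℝ)| := by
    push_cast
    ring_nf
  rw [hgoal]
  have hsumT : ∑ i, (ε i : ℝ) * ((φ (Pi.single i (v i)) : ℤ) : ℝ)
      = ∑ k ∈ Finset.range d, (if hk : k < d then
          (ε ⟨k,hk⟩ : ℝ) * ((φ (Pi.single (⟨k,hk⟩ : Fin d) (v ⟨k,hk⟩)) : ℤ) : ℝ) else 0) := by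
    rw [← Fin.sum_univ_eq_sum_range]
    apply Finset.sum_congr rfl
    intro x _
    rw [dif_pos x.isLt]
  have htel : ((b v : ℤ) : ℝ) - ∑ i, (ε i : ℝ) * ((φ (Pi.single i (v i)) : ℤ) : ℝ)
      = ∑ k ∈ Finset.range d, (((b (w (k+1)) : ℤ) : ℝ) - ((b (w k) : ℤ) : ℝ)
        - (if hk : k < d then
          (ε ⟨k,hk⟩ : ℝ) * ((φ (Pi.single (⟨k,hk⟩ : Fin d) (v ⟨k,hk⟩)) : ℤ) : ℝ) else 0)) := by
    rw [Finset.sum_sub_distrib, Finset.sum_range_sub (fun k => ((b (w k) : ℤ) : ℝ)),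
      hw0, hwd, hb0, hsumT]
    push_cast
    ring
  rw [htel]
  calc |∑ k ∈ Finset.range d, (((b (w (k+1)) : ℤ) : ℝ) - ((b (w k) : ℤ) : ℝ)
        - (if hk : k < d then
          (ε ⟨k,hk⟩ : ℝ) * ((φ (Pi.single (⟨k,hk⟩ : Fin d) (v ⟨k,hk⟩)) : ℤ) : ℝ) else 0))|
      ≤ ∑ k ∈ Finset.range d, |(((b (w (k+1)) : ℤ) : ℝ) - ((b (w k) : ℤ) : ℝ)
        - (if hk : k < d then
          (ε ⟨k,hk⟩ : ℝ) * ((φ (Pi.single (⟨k,hk⟩ : Fin d) (v ⟨k,hk⟩)) : ℤ) : ℝ) else 0))| :=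
        Finset.abs_sum_le_sum_abs _ _
    _ ≤ ∑ _k ∈ Finset.range d, K := by
        apply Finset.sum_le_sum
        intro k hk
        have hk' : k < d := Finset.mem_range.mp hk
        rw [dif_pos hk']
        exact hterm k hk'
    _ = (d : ℝ) * K := by
        rw [Finset.sum_const, Finset.card_range, nsmul_eq_mul]
    _ ≤ 2 * K * d := by
        have h0 : 0 ≤ K * d := mul_nonneg hK0 (Nat.cast_nonneg d)
        linarith
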